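/- Fix $s > 0$ and $b > 0$, and let $g(x) = s x^b + 2sx + 2s^2 x^b - s - s x^{b+1} - s^2 x^b - s x (1-x)^b - s^2 (1-x)^b$ for $x \in (0,1)$. Then $g$ is strictly increasing on $(0,1)$ and $g(1/2) = 0$; consequently $g(x) > 0$ for $x \in (1/2,1)$ and $g(x) < 0$ for $x \in (0,1/2)$. -/

import Mathlib

/-- The numerator function arising in the comparison `p(b,x) - p(0,x)`. -/
noncomputable def g (s b x : ℝ) : ℝ :=
  s * x ^ b + 2 * s * x + 2 * s ^ 2 * x ^ b - s - s * x ^ (b + 1) - s ^ 2 * x ^ b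
    - s * x * (1 - x) ^ b - s ^ 2 * (1 - x) ^ b

lemma g_hasDerivAt (s b : ℝ) {x : ℝ} (hx : x ∈ Set.Ioo (0 : ℝ) 1) :
    HasDerivAt (g s b)
      (s * b * x ^ (b - 1) * (1 + s - x) + s * (2 - x ^ b - (1 - x) ^ b)
        + s * b * (x + s) * (1 - x) ^ (b - 1)) x := by
  obtain ⟨hx0, hx1⟩ := hx
  have h1x : (0:ℝ) < 1 - x := by linarith
  have d1 : HasDerivAt (fun y : ℝ => y ^ b) (b * x ^ (b - 1)) x :=
    Real.hasDerivAt_rpow_const (Or.inl hx0.ne')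
  have d2 : HasDerivAt (fun y : ℝ => y ^ (b + 1)) ((b + 1) * x ^ b) x := by
    have h := Real.hasDerivAt_rpow_const (p := b + 1) (x := x) (Or.inl hx0.ne')
    rw [show b + 1 - 1 = b from by ring] at h
    exact h
  have d3 : HasDerivAt (fun y : ℝ => (1 - y) ^ b) (b * (1 - x) ^ (b - 1) * (-1)) x := by
    have hsub : HasDerivAt (fun y : ℝ => 1 - y) (-1) x := by
      simpa using (hasDerivAt_id x).const_sub 1
    have h := (Real.hasDerivAt_rpow_const (p := b) (x := 1 - x) (Or.inl h1x.ne')).comp x hsub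
    simpa [Function.comp_def] using h
  have e2 : HasDerivAt (fun y : ℝ => 2 * s * y) (2 * s * 1) x :=
    (hasDerivAt_id x).const_mul (2 * s)
  have e7 : HasDerivAt (fun y : ℝ => s * y * (1 - y) ^ b)
      (s * 1 * (1 - x) ^ b + s * x * (b * (1 - x) ^ (b - 1) * (-1))) x :=
    ((hasDerivAt_id x).const_mul s).mul d3
  have hD := (((((((d1.const_mul s).add e2).add (d1.const_mul (2 * s ^ 2))).sub
    (hasDerivAt_const x s)).sub (d2.const_mul s)).sub (d1.const_mul (s ^ 2))).sub e7).sub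
    (d3.const_mul (s ^ 2))
  have hxb : x ^ b = x ^ (b - 1) * x := by
    rw [← Real.rpow_add_one hx0.ne' (b - 1)]; ring_nf
  have hEq : s * (b * x ^ (b - 1)) + 2 * s * 1 + 2 * s ^ 2 * (b * x ^ (b - 1)) - 0
      - s * ((b + 1) * x ^ b) - s ^ 2 * (b * x ^ (b - 1))
      - (s * 1 * (1 - x) ^ b + s * x * (b * (1 - x) ^ (b - 1) * (-1)))
      - s ^ 2 * (b * (1 - x) ^ (b - 1) * (-1))
      = s * b * x ^ (b - 1) * (1 + s - x) + s * (2 - x ^ b - (1 - x) ^ b)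
        + s * b * (x + s) * (1 - x) ^ (b - 1) := by
    rw [hxb]; ring
  rw [hEq] at hD
  exact hD

theorem stmt4 (s b : ℝ) (hs : 0 < s) (hb : 0 < b) :
    StrictMonoOn (g s b) (Set.Ioo (0 : ℝ) 1) ∧
    g s b (1/2) = 0 ∧
    (∀ x ∈ Set.Ioo (1/2 : ℝ) 1, 0 < g s b x) ∧
    (∀ x ∈ Set.Ioo (0 : ℝ) (1/2 : ℝ), g s b x < 0) := by
  have hmono : StrictMonoOn (g s b) (Set.Ioo (0 : ℝ) 1) := by
    apply strictMonoOn_of_deriv_pos (convex_Ioo 0 1)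
    · exact fun x hx => (g_hasDerivAt s b hx).continuousAt.continuousWithinAt
    · intro x hx
      rw [interior_Ioo] at hx
      rw [(g_hasDerivAt s b hx).deriv]
      obtain ⟨hx0, hx1⟩ := hx
      have h1x : (0:ℝ) < 1 - x := by linarith
      have p1 : (0:ℝ) < x ^ (b - 1) := Real.rpow_pos_of_pos hx0 _
      have p2 : (0:ℝ) < (1 - x) ^ (b - 1) := Real.rpow_pos_of_pos h1x _
      have p3 : x ^ b < 1 := Real.rpow_lt_one hx0.le hx1 hb
      have p4 : (1 - x) ^ b < 1 := Real.rpow_lt_one h1x.le (by linarith) hb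
      nlinarith [mul_pos (mul_pos (mul_pos hs hb) p1) (by linarith : (0:ℝ) < 1 + s - x),
        mul_pos (mul_pos (mul_pos hs hb) (by linarith : (0:ℝ) < x + s)) p2,
        mul_pos hs (by linarith : (0:ℝ) < 2 - x ^ b - (1 - x) ^ b)]
  have hhalf : g s b (1/2) = 0 := by
    unfold g
    have h2 : ((1:ℝ)/2) ^ (b + 1) = (1/2) ^ b * (1/2) := by
      rw [Real.rpow_add_one (by norm_num) b]
    have h3 : (1:ℝ) - 1/2 = 1/2 := by norm_num
    rw [h2, h3]; ring
  refine ⟨hmono, hhalf, ?_, ?_⟩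
  · intro x hx
    have := hmono (by norm_num : (1/2:ℝ) ∈ Set.Ioo (0:ℝ) 1)
      ⟨by linarith [hx.1], hx.2⟩ hx.1
    linarith [this, hhalf.ge]
  · intro x hx
    have := hmono ⟨hx.1, by linarith [hx.2]⟩
      (by norm_num : (1/2:ℝ) ∈ Set.Ioo (0:ℝ) 1) hx.2
    linarith [this, hhalf.le]
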